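/- Let G be a finite simple graph and let c : V(G) → ℝ be a proper vertex coloring of G (adjacent vertices receive different values) whose set of values is linearly independent over the rationals ℚ. Then for every pair of adjacent vertices u and v, Σ_{x ∈ N(u)} c(x) ≠ Σ_{x ∈ N(v)} c(x); in particular, every graph with chromatic number k admits a real-valued coloring with k values under which the neighborhood sums of any two adjacent vertices differ. -/

import Mathlib

/-- The sum of the values of `f` over the neighborhood of `u` in `G`. -/
noncomputable def nsum {V : Type*} [Fintype V] {M : Type*} [AddCommMonoid M]
    (G : SimpleGraph V) (f : V → M) (u : V) : M :=
  letI := Classical.decRel G.Adj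
  ∑ x ∈ G.neighborFinset u, f x

theorem key_nsum_ne {V : Type*} [Fintype V] (G : SimpleGraph V) (c : V → ℝ)
    (hproper : ∀ ⦃u v : V⦄, G.Adj u v → c u ≠ c v)
    (hli : LinearIndependent ℚ ((↑) : Set.range c → ℝ)) :
    ∀ ⦃u v : V⦄, G.Adj u v → nsum G c u ≠ nsum G c v := by
  letI := Classical.decRel G.Adj
  intro u v huv heq
  have hnsum : ∀ w : V, nsum G c w = ∑ x ∈ G.neighborFinset w, c x := fun w => rfl
  set e : V → Set.range c := fun x => ⟨c x, Set.mem_range_self x⟩ with he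
  set l : (Set.range c) →₀ ℚ :=
    (∑ x ∈ G.neighborFinset u, Finsupp.single (e x) (1 : ℚ))
      - (∑ x ∈ G.neighborFinset v, Finsupp.single (e x) (1 : ℚ)) with hl
  have htot : Finsupp.linearCombination ℚ ((↑) : Set.range c → ℝ) l = 0 := by
    rw [hl, map_sub, map_sum, map_sum]
    simp only [Finsupp.linearCombination_single, one_smul]
    have h1 : (∑ x ∈ G.neighborFinset u, ((e x : ℝ))) = nsum G c u := by
      rw [hnsum u]
    have h2 : (∑ x ∈ G.neighborFinset v, ((e x : ℝ))) = nsum G c v := by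
      rw [hnsum v]
    rw [h1, h2, heq, sub_self]
  have hl0 : l = 0 := linearIndependent_iff.mp hli l htot
  classical
  have hval : l (e v) = 0 := by rw [hl0]; rfl
  rw [hl, Finsupp.sub_apply, Finsupp.finset_sum_apply, Finsupp.finset_sum_apply] at hval
  have hsum2 : (∑ x ∈ G.neighborFinset v, (Finsupp.single (e x) (1 : ℚ)) (e v)) = 0 := by
    apply Finset.sum_eq_zero
    intro x hx
    rw [SimpleGraph.mem_neighborFinset] at hx
    have : e x ≠ e v := by
      intro h
      exact hproper hx ((congrArg Subtype.val h).symm)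
    rw [Finsupp.single_apply, if_neg this]
  have hsum1 : (0 : ℚ) < ∑ x ∈ G.neighborFinset u, (Finsupp.single (e x) (1 : ℚ)) (e v) := by
    have hv : v ∈ G.neighborFinset u := (SimpleGraph.mem_neighborFinset G u v).mpr huv
    have hle : (Finsupp.single (e v) (1 : ℚ)) (e v)
        ≤ ∑ x ∈ G.neighborFinset u, (Finsupp.single (e x) (1 : ℚ)) (e v) := by
      apply Finset.single_le_sum (f := fun x => (Finsupp.single (e x) (1 : ℚ)) (e v)) _ hv
      intro i _
      simp only [Finsupp.single_apply]
      split <;> norm_num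
    rw [Finsupp.single_apply, if_pos rfl] at hle
    linarith
  rw [hsum2, sub_zero] at hval
  exact absurd hval (ne_of_gt hsum1)

theorem proper_rationally_independent_coloring_is_additive
    {V : Type*} [Fintype V] (G : SimpleGraph V) (c : V → ℝ)
    (hproper : ∀ ⦃u v : V⦄, G.Adj u v → c u ≠ c v)
    (hli : LinearIndependent ℚ ((↑) : Set.range c → ℝ)) :
    (∀ ⦃u v : V⦄, G.Adj u v → nsum G c u ≠ nsum G c v) ∧
    (∀ (W : Type) [Fintype W] (H : SimpleGraph W) (k : ℕ),
      H.chromaticNumber = k →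
      ∃ (d : W → ℝ) (s : Finset ℝ), s.card = k ∧ (∀ w, d w ∈ s) ∧
        ∀ ⦃u v : W⦄, H.Adj u v → nsum H d u ≠ nsum H d v) := by
  classical
  refine ⟨key_nsum_ne G c hproper hli, ?_⟩
  intro W _ H k hk
  have hcol : H.Colorable k := by
    rw [← SimpleGraph.chromaticNumber_le_iff_colorable, hk]
  obtain ⟨C⟩ := hcol
  -- a linearly independent family of reals over ℚ indexed by an infinite type
  set b := Module.Basis.ofVectorSpace ℚ ℝ with hb
  haveI : Infinite (Module.Basis.ofVectorSpaceIndex ℚ ℝ) := by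
    rw [← not_finite_iff_infinite]
    intro hfin
    haveI : Countable (Module.Basis.ofVectorSpaceIndex ℚ ℝ →₀ ℚ) := inferInstance
    have : Countable ℝ := Countable.of_equiv _ b.repr.toEquiv.symm
    exact not_countable this
  obtain ⟨f⟩ : Nonempty (Fin k ↪ Module.Basis.ofVectorSpaceIndex ℚ ℝ) :=
    ⟨(Fin.valEmbedding.trans (Function.Embedding.trans ⟨Nat.cast, Nat.cast_injective⟩
      (Infinite.natEmbedding _)))⟩
  set g : Fin k → ℝ := fun i => b (f i) with hg
  have hginj : Function.Injective g := fun i j h =>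
    f.injective (b.injective h)
  have hgli : LinearIndependent ℚ g := b.linearIndependent.comp f f.injective
  set d : W → ℝ := fun w => g (C w) with hd
  refine ⟨d, Finset.univ.image g, ?_, ?_, ?_⟩
  · rw [Finset.card_image_of_injective _ hginj, Finset.card_univ, Fintype.card_fin]
  · intro w; exact Finset.mem_image_of_mem g (Finset.mem_univ _)
  · have hdproper : ∀ ⦃u v : W⦄, H.Adj u v → d u ≠ d v := by
      intro u v huv h
      exact C.valid huv (hginj h)
    have hdli : LinearIndependent ℚ ((↑) : Set.range d → ℝ) := by
      have hsub : Set.range d ⊆ Set.range g := Set.range_comp_subset_range C g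
      exact (hgli.linearIndepOn_id).mono hsub
    exact key_nsum_ne H d hdproper hdli
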